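/- Let x, y, T > 0 and let τ be real. There exists a pair (a, a') ≠ (0, 0) of real numbers such that the affine function h(t) = a + a'·t satisfies both -h'(0) = τ·x·h(0) and h'(T) = τ·y·h(T) if and only if τ = 0 or τ = (x + y)/(T·x·y). -/
import Mathlib


/-- For `x, y, T > 0` and `τ ∈ ℝ`, a nontrivial affine `h t = a + a' t`
satisfies `-h'(0) = τ x h(0)` and `h'(T) = τ y h(T)` if and only if
`τ = 0` or `τ = (x + y) / (T x y)`. -/
theorem stmt18 (x y T : ℝ) (hx : 0 < x) (hy : 0 < y) (hT : 0 < T) (τ : ℝ) :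
    (∃ a a' : ℝ, (a, a') ≠ (0, 0) ∧
      -(deriv (fun t : ℝ => a + a' * t) 0) = τ * x * ((fun t : ℝ => a + a' * t) 0) ∧
      deriv (fun t : ℝ => a + a' * t) T = τ * y * ((fun t : ℝ => a + a' * t) T)) ↔
    (τ = 0 ∨ τ = (x + y) / (T * x * y)) := by
  have hd : ∀ (a a' s : ℝ), deriv (fun t : ℝ => a + a' * t) s = a' := by
    intro a a' s
    have : HasDerivAt (fun t : ℝ => a + a' * t) a' s := by
      simpa using ((hasDerivAt_id s).const_mul a').const_add a
    exact this.deriv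
  constructor
  · rintro ⟨a, a', hne, h1, h2⟩
    simp only [hd, mul_zero, add_zero] at h1 h2
    by_cases hτ : τ = 0
    · exact Or.inl hτ
    · right
      have ha : a ≠ 0 := by
        intro h0
        apply hne
        have : a' = 0 := by
          have := h1
          rw [h0] at this
          linarith [this]
        simp [h0, this]
      -- h1 : -a' = τ * x * a ; h2 : a' = τ * y * (a + a' * T)
      have key : τ * a * (τ * (T * x * y) - (x + y)) = 0 := by
        linear_combination (1 - τ * y * T) * h1 + h2
      have hTxy : T * x * y ≠ 0 := by positivity
      rcases mul_eq_zero.1 key with h | h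
      · rcases mul_eq_zero.1 h with h | h
        · exact absurd h hτ
        · exact absurd h ha
      · field_simp
        linarith
  · rintro (rfl | rfl)
    · exact ⟨1, 0, by simp, by simp [hd]⟩
    · refine ⟨1, -((x + y) / (T * x * y)) * x * 1, by simp, ?_, ?_⟩ <;>
        simp only [hd] <;> field_simp <;> ring
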